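/- Let Q denote the quotient of ℚ × (ℚ × [0,1]) by the relation identifying (q,(q',0)) with (q,(q'',0)) for all q,q',q'' ∈ ℚ, with the quotient topology (ℚ with its standard topology). Then the map h : Q → Q induced by (q,(q',t)) ↦ (q,(q'−q,t)) is a well-defined homeomorphism, and it intertwines the diagonal translation with translation in the first factor: for all r,q,q' ∈ ℚ and t ∈ [0,1], h(q+r, [q'+r, t]) equals the image of h(q, [q', t]) under translating the first coordinate by r. -/
import Mathlib


open Set

/-- Relation on `ℚ × (ℚ × [0,1])` identifying `(q,(q',0)) ~ (q,(q'',0))`. -/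
abbrev qRel : ℚ × (ℚ × Icc (0 : ℝ) 1) → ℚ × (ℚ × Icc (0 : ℝ) 1) → Prop :=
  fun p q => p = q ∨ (p.1 = q.1 ∧ (p.2.2 : ℝ) = 0 ∧ (q.2.2 : ℝ) = 0)

/-- The quotient `Q` of `ℚ × (ℚ × [0,1])` by `(q,(q',0)) ~ (q,(q'',0))`,
with the quotient topology. -/
abbrev QSpace := Quot qRel

/-- The map `(q,(q',t)) ↦ (q,(q'−q,t))` on representatives. -/
def shearPre : ℚ × (ℚ × Icc (0 : ℝ) 1) → ℚ × (ℚ × Icc (0 : ℝ) 1) := fun p =>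
  (p.1, (p.2.1 - p.1, p.2.2))

/-- The (well-defined) induced map `h : Q → Q`, `(q,[q',t]) ↦ (q,[q'−q,t])`. -/
def shear : QSpace → QSpace :=
  Quot.map shearPre
    (by
      rintro a b (rfl | ⟨h1, h2, h3⟩)
      · exact Or.inl rfl
      · exact Or.inr ⟨by simp only [shearPre]; rw [h1], h2, h3⟩)

/-- Translation of the first coordinate by `r`, induced on `Q`. -/
def translateFst (r : ℚ) : QSpace → QSpace :=
  Quot.map (fun p => (p.1 + r, p.2))
    (by
      rintro a b (rfl | ⟨h1, h2, h3⟩)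
      · exact Or.inl rfl
      · exact Or.inr ⟨by simp only []; rw [h1], h2, h3⟩)

/-- The map `h : Q → Q` induced by `(q,(q',t)) ↦ (q,(q'−q,t))` is a
well-defined homeomorphism of the quotient-topologized `Q`, and it
intertwines the diagonal translation with translation in the first factor:
`h(q+r, [q'+r, t])` is the image of `h(q, [q', t])` under translation of the
first coordinate by `r`. -/

def shearPreInv : ℚ × (ℚ × Icc (0 : ℝ) 1) → ℚ × (ℚ × Icc (0 : ℝ) 1) := fun p =>
  (p.1, (p.2.1 + p.1, p.2.2))

def shearInv : QSpace → QSpace :=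
  Quot.map shearPreInv
    (by
      rintro a b (rfl | ⟨h1, h2, h3⟩)
      · exact Or.inl rfl
      · exact Or.inr ⟨by simp only [shearPreInv]; rw [h1], h2, h3⟩)

theorem shear_homeomorph_and_intertwines :
    ∃ H : QSpace ≃ₜ QSpace,
      (∀ p : ℚ × (ℚ × Icc (0 : ℝ) 1),
        H (Quot.mk qRel p) = Quot.mk qRel (shearPre p)) ∧
      ∀ (r q q' : ℚ) (t : Icc (0 : ℝ) 1),
        H (Quot.mk qRel (q + r, (q' + r, t))) =
          translateFst r (H (Quot.mk qRel (q, (q', t)))) := by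
  have contPre : Continuous shearPre := by
    unfold shearPre; fun_prop
  have contPreInv : Continuous shearPreInv := by
    unfold shearPreInv; fun_prop
  have hc : Continuous shear := by
    apply continuous_quot_lift
    exact (continuous_quot_mk.comp contPre)
  have hcInv : Continuous shearInv := by
    apply continuous_quot_lift
    exact (continuous_quot_mk.comp contPreInv)
  refine ⟨⟨⟨shear, shearInv, ?_, ?_⟩, hc, hcInv⟩, ?_, ?_⟩
  · intro x
    induction x using Quot.ind with
    | _ p =>
      show Quot.mk qRel (shearPreInv (shearPre p)) = Quot.mk qRel p
      simp [shearPre, shearPreInv]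
  · intro x
    induction x using Quot.ind with
    | _ p =>
      show Quot.mk qRel (shearPre (shearPreInv p)) = Quot.mk qRel p
      simp [shearPre, shearPreInv]
  · intro p; rfl
  · intro r q q' t
    show Quot.mk qRel _ = Quot.mk qRel _
    simp only [shearPre, translateFst, Quot.map]
    congr 2 <;> ring
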